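/- Comparison principle (N=2): Let T > 0 and u₁, u₂ ∈ C([0,T]×[0,1]) ∩ C¹((0,T]×[0,1]) ∩ C^{1,2}((0,T]×(0,1)), with u₁(t,·), u₂(t,·) nondecreasing for t ∈ (0,T], and sup_{t∈(0,T]} t^γ ‖u_{i₀}(t)‖_{C¹} < ∞ for some i₀ ∈ {1,2} and γ < 1. If ∂ₜu₁ ≤ x·∂ₓₓu₁ + u₁·∂ₓu₁ and ∂ₜu₂ ≥ x·∂ₓₓu₂ + u₂·∂ₓu₂ on (0,T]×(0,1), with u₁ ≤ u₂ at t = 0 and at x = 0 and x = 1, then u₁ ≤ u₂ on [0,T]×[0,1]. -/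

import Mathlib

open Real Set
open Filter Topology

lemma left_max_deriv_nonneg {f : ℝ → ℝ} {a t f' : ℝ} (hat : a < t)
    (hd : HasDerivAt f f' t) (hmax : ∀ s, a < s → s < t → f s ≤ f t) : 0 ≤ f' := by
  have h1 : HasDerivWithinAt f f' (Iio t) t := hd.hasDerivWithinAt
  rw [hasDerivWithinAt_iff_tendsto_slope] at h1
  have hset : Iio t \ {t} = Iio t := Set.diff_singleton_eq_self (by simp)
  rw [hset] at h1
  refine ge_of_tendsto h1 ?_
  have hmem : Ioo a t ∈ 𝓝[Iio t] t := by
    apply mem_nhdsWithin.2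
    exact ⟨Ioi a, isOpen_Ioi, hat, by rintro y ⟨hy1, hy2⟩; exact ⟨hy1, hy2⟩⟩
  filter_upwards [hmem] with s hs
  have h0 : f s - f t ≤ 0 := sub_nonpos.2 (hmax s hs.1 hs.2)
  have h2 : s - t < 0 := sub_neg.2 hs.2
  rw [slope_def_field]
  exact div_nonneg_of_nonpos h0 h2.le

lemma second_deriv_test_max {f f' : ℝ → ℝ} {x c : ℝ} (hx : x ∈ Ioo (0:ℝ) 1)
    (hd : ∀ y ∈ Ioo (0:ℝ) 1, HasDerivAt f (f' y) y) (hd2 : HasDerivAt f' c x)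
    (hf'0 : f' x = 0) (hmax : ∀ y ∈ Icc (0:ℝ) 1, f y ≤ f x) : c ≤ 0 := by
  by_contra hc
  push_neg at hc
  have h1 : HasDerivWithinAt f' c (Ioi x) x := hd2.hasDerivWithinAt
  rw [hasDerivWithinAt_iff_tendsto_slope] at h1
  have hset : Ioi x \ {x} = Ioi x := Set.diff_singleton_eq_self (by simp)
  rw [hset] at h1
  have hev : ∀ᶠ y in 𝓝[>] x, 0 < f' y := by
    have := h1.eventually (eventually_gt_nhds (show (0:ℝ) < c from hc))
    filter_upwards [this, self_mem_nhdsWithin] with y hy hy'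
    rw [slope_def_field, hf'0, sub_zero] at hy
    have hyx : 0 < y - x := sub_pos.2 hy'
    have h2 := mul_pos hy hyx
    rwa [div_mul_cancel₀ _ (ne_of_gt hyx)] at h2
  rw [eventually_nhdsWithin_iff] at hev
  rcases Metric.eventually_nhds_iff.1 hev with ⟨δ, hδ, hball⟩
  set b := min (x + δ/2) ((x+1)/2) with hb
  have hxb : x < b := lt_min (by linarith) (by linarith [hx.2])
  have hb1 : b < 1 := lt_of_le_of_lt (min_le_right _ _) (by linarith [hx.2])
  have hpos : ∀ y ∈ Ioo x b, 0 < f' y := by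
    intro y hy
    apply hball (show dist y x < δ by
      rw [Real.dist_eq, abs_of_pos (sub_pos.2 hy.1)]
      have : y < x + δ/2 := lt_of_lt_of_le hy.2 (min_le_left _ _)
      linarith)
    exact hy.1
  have hsub : Icc x b ⊆ Ioo (0:ℝ) 1 := fun y hy =>
    ⟨lt_of_lt_of_le hx.1 hy.1, lt_of_le_of_lt hy.2 hb1⟩
  have hmono : StrictMonoOn f (Icc x b) := by
    apply strictMonoOn_of_deriv_pos (convex_Icc x b)
    · intro y hy
      exact (hd y (hsub hy)).continuousAt.continuousWithinAt
    · intro y hy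
      rw [interior_Icc] at hy
      rw [(hd y (hsub ⟨hy.1.le, hy.2.le⟩)).deriv]
      exact hpos y hy
  have : f x < f b := hmono (left_mem_Icc.2 hxb.le) (right_mem_Icc.2 hxb.le) hxb
  exact absurd (hmax b ⟨le_of_lt (lt_trans hx.1 hxb), hb1.le⟩) (not_le.2 this)

lemma max_principle_aux (T γ M : ℝ) (hT : 0 < T) (hγ : γ < 1) (hM : 0 ≤ M)
    (w wt wx wxx : ℝ → ℝ → ℝ)
    (hc : ContinuousOn (fun p : ℝ × ℝ => w p.1 p.2) (Icc 0 T ×ˢ Icc 0 1))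
    (hdt : ∀ t ∈ Ioc (0:ℝ) T, ∀ x ∈ Icc (0:ℝ) 1, HasDerivAt (fun s => w s x) (wt t x) t)
    (hdx : ∀ t ∈ Ioc (0:ℝ) T, ∀ x ∈ Ioo (0:ℝ) 1, HasDerivAt (w t) (wx t x) x)
    (hdxx : ∀ t ∈ Ioc (0:ℝ) T, ∀ x ∈ Ioo (0:ℝ) 1, HasDerivAt (wx t) (wxx t x) x)
    (hkey : ∀ t ∈ Ioc (0:ℝ) T, ∀ x ∈ Ioo (0:ℝ) 1, wx t x = 0 → wxx t x ≤ 0 → 0 < w t x →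
      wt t x ≤ M * t ^ (-γ) * w t x)
    (hinit : ∀ x ∈ Icc (0:ℝ) 1, w 0 x ≤ 0)
    (hbc0 : ∀ t ∈ Icc (0:ℝ) T, w t 0 ≤ 0)
    (hbc1 : ∀ t ∈ Icc (0:ℝ) T, w t 1 ≤ 0) :
    ∀ t ∈ Icc (0:ℝ) T, ∀ x ∈ Icc (0:ℝ) 1, w t x ≤ 0 := by
  have h1γ : (0:ℝ) < 1 - γ := by linarith
  set g : ℝ → ℝ := fun t => M / (1 - γ) * t ^ (1 - γ) + t with hg
  have hgc : Continuous g := by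
    apply Continuous.add (Continuous.mul continuous_const
      (Real.continuous_rpow_const h1γ.le)) continuous_id
  have hgd : ∀ t : ℝ, 0 < t → HasDerivAt g (M * t ^ (-γ) + 1) t := by
    intro t ht
    have h1 : HasDerivAt (fun s : ℝ => s ^ (1 - γ)) ((1 - γ) * t ^ (1 - γ - 1)) t :=
      Real.hasDerivAt_rpow_const (Or.inl ht.ne')
    have h2 := (h1.const_mul (M / (1 - γ))).add (hasDerivAt_id t)
    refine h2.congr_deriv ?_
    rw [show (1:ℝ) - γ - 1 = -γ by ring]
    field_simp
  -- key ε-claim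
  have key : ∀ ε : ℝ, 0 < ε → ∀ p ∈ (Icc (0:ℝ) T ×ˢ Icc (0:ℝ) 1),
      w p.1 p.2 * Real.exp (-(g p.1)) - ε * p.1 ≤ 0 := by
    intro ε hε
    set Z : ℝ × ℝ → ℝ := fun p => w p.1 p.2 * Real.exp (-(g p.1)) - ε * p.1 with hZ
    set K : Set (ℝ × ℝ) := Icc (0:ℝ) T ×ˢ Icc (0:ℝ) 1 with hK
    have hZc : ContinuousOn Z K := by
      apply ContinuousOn.sub
      · exact hc.mul (((hgc.comp continuous_fst).neg.rexp).continuousOn)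
      · exact (continuous_const.mul continuous_fst).continuousOn
    have hKc : IsCompact K := (isCompact_Icc.prod isCompact_Icc)
    have hKne : K.Nonempty := ⟨(0, 0), by
      constructor <;> simp [hK, hT.le]⟩
    obtain ⟨p₀, hp₀K, hp₀max⟩ := hKc.exists_isMaxOn hKne hZc
    intro p hp
    by_contra hpos
    push_neg at hpos
    have hZp₀ : 0 < Z p₀ := lt_of_lt_of_le hpos (hp₀max hp)
    obtain ⟨t₀, x₀⟩ := p₀
    have ht₀m : t₀ ∈ Icc (0:ℝ) T := hp₀K.1
    have hx₀m : x₀ ∈ Icc (0:ℝ) 1 := hp₀K.2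
    have hE : 0 < Real.exp (-(g t₀)) := Real.exp_pos _
    have ht₀ : 0 < t₀ := by
      rcases eq_or_lt_of_le ht₀m.1 with h | h
      · exfalso
        have : Z (t₀, x₀) ≤ 0 := by
          simp only [hZ, ← h]
          have := hinit x₀ hx₀m
          nlinarith [Real.exp_pos (-(g (0:ℝ)))]
        linarith
      · exact h
    have ht₀' : t₀ ∈ Ioc (0:ℝ) T := ⟨ht₀, ht₀m.2⟩
    have hx₀ : x₀ ∈ Ioo (0:ℝ) 1 := by
      constructor
      · rcases eq_or_lt_of_le hx₀m.1 with h | h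
        · exfalso
          have hb := hbc0 t₀ ht₀m
          have : Z (t₀, x₀) ≤ 0 := by
            simp only [hZ, ← h]
            nlinarith [mul_pos hε ht₀, hE]
          linarith
        · exact h
      · rcases eq_or_lt_of_le hx₀m.2 with h | h
        · exfalso
          have hb := hbc1 t₀ ht₀m
          have : Z (t₀, x₀) ≤ 0 := by
            simp only [hZ, h]
            nlinarith [mul_pos hε ht₀, hE]
          linarith
        · exact h
    -- spatial max
    have hxmax : ∀ y ∈ Icc (0:ℝ) 1, w t₀ y ≤ w t₀ x₀ := by
      intro y hy
      have h1 : Z (t₀, y) ≤ Z (t₀, x₀) := hp₀max ⟨ht₀m, hy⟩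
      simp only [hZ] at h1
      exact le_of_mul_le_mul_right (by linarith) hE
    have hwx0 : wx t₀ x₀ = 0 := by
      have hloc : IsLocalMax (w t₀) x₀ := by
        apply Filter.eventually_of_mem (Icc_mem_nhds hx₀.1 hx₀.2)
        exact fun y hy => hxmax y hy
      exact hloc.hasDerivAt_eq_zero (hdx t₀ ht₀' x₀ hx₀)
    have hwxx : wxx t₀ x₀ ≤ 0 :=
      second_deriv_test_max hx₀ (fun y hy => hdx t₀ ht₀' y hy) (hdxx t₀ ht₀' x₀ hx₀)
        hwx0 hxmax
    have hw : 0 < w t₀ x₀ := by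
      have : 0 < w t₀ x₀ * Real.exp (-(g t₀)) := by
        have : 0 < ε * t₀ := mul_pos hε ht₀
        simp only [hZ] at hZp₀
        nlinarith [mul_pos hε ht₀]
      by_contra hneg
      push_neg at hneg
      nlinarith
    have hwt := hkey t₀ ht₀' x₀ hx₀ hwx0 hwxx hw
    -- time derivative
    set c : ℝ := M * t₀ ^ (-γ) with hc'
    have hf : HasDerivAt (fun s => w s x₀ * Real.exp (-(g s)) - ε * s)
        (wt t₀ x₀ * Real.exp (-(g t₀)) +
          w t₀ x₀ * (Real.exp (-(g t₀)) * (-(c + 1))) - ε * 1) t₀ := by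
      have h1 := hdt t₀ ht₀' x₀ hx₀m
      have h2 : HasDerivAt (fun s => Real.exp (-(g s)))
          (Real.exp (-(g t₀)) * (-(c + 1))) t₀ := by
        simpa [hc'] using ((hgd t₀ ht₀).neg).exp
      exact (h1.mul h2).sub ((hasDerivAt_id t₀).const_mul ε)
    have hge : 0 ≤ wt t₀ x₀ * Real.exp (-(g t₀)) +
        w t₀ x₀ * (Real.exp (-(g t₀)) * (-(c + 1))) - ε * 1 := by
      apply left_max_deriv_nonneg ht₀ hf
      intro s hs1 hs2
      have hsm : (s, x₀) ∈ K := ⟨⟨hs1.le, le_trans hs2.le ht₀m.2⟩, hx₀m⟩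
      have := hp₀max hsm
      simpa [hZ] using this
    have hcpos : 0 ≤ c := by positivity
    nlinarith [mul_le_mul_of_nonneg_right hwt hE.le, mul_pos hw hE]
  -- conclude ε → 0
  intro t ht x hx
  by_contra hw
  push_neg at hw
  set C : ℝ := T * Real.exp (g T) with hC
  have hCpos : 0 < C := mul_pos hT (Real.exp_pos _)
  have hbound : ∀ ε : ℝ, 0 < ε → w t x ≤ ε * C := by
    intro ε hε
    have h1 := key ε hε (t, x) ⟨ht, hx⟩
    simp only at h1
    have hgm : g t ≤ g T := by
      have h2 : t ^ (1 - γ) ≤ T ^ (1 - γ) :=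
        Real.rpow_le_rpow ht.1 ht.2 h1γ.le
      have h3 : 0 ≤ M / (1 - γ) := by positivity
      simp only [hg]
      nlinarith [ht.2]
    have hE : Real.exp (g t) ≤ Real.exp (g T) := Real.exp_le_exp.2 hgm
    have h4 : w t x ≤ ε * t * Real.exp (g t) := by
      have h5 := mul_le_mul_of_nonneg_right (show w t x * Real.exp (-(g t)) ≤ ε * t by
        linarith) (Real.exp_pos (g t)).le
      rwa [mul_assoc, ← Real.exp_add, neg_add_cancel, Real.exp_zero, mul_one] at h5
    calc w t x ≤ ε * t * Real.exp (g t) := h4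
      _ ≤ ε * C := by
          rw [hC]
          have h6 : 0 ≤ ε * t := mul_nonneg hε.le ht.1
          nlinarith [mul_le_mul_of_nonneg_left hE h6,
            mul_le_mul_of_nonneg_right (mul_le_mul_of_nonneg_left ht.2 hε.le)
              (Real.exp_pos (g T)).le]
  have h7 : w t x / (2 * C) * C = w t x / 2 := by
    field_simp
  have h8 := hbound (w t x / (2 * C)) (div_pos hw (by linarith))
  rw [h7] at h8
  linarith

theorem comparison_principle_N2 (T : ℝ) (hT : 0 < T)
    (u₁ u₂ u₁t u₂t u₁x u₂x u₁xx u₂xx : ℝ → ℝ → ℝ)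
    (hc1 : ContinuousOn (fun p : ℝ × ℝ => u₁ p.1 p.2) (Set.Icc 0 T ×ˢ Set.Icc 0 1))
    (hc2 : ContinuousOn (fun p : ℝ × ℝ => u₂ p.1 p.2) (Set.Icc 0 T ×ˢ Set.Icc 0 1))
    (hcx1 : ContinuousOn (fun p : ℝ × ℝ => u₁x p.1 p.2) (Set.Ioc 0 T ×ˢ Set.Icc 0 1))
    (hcx2 : ContinuousOn (fun p : ℝ × ℝ => u₂x p.1 p.2) (Set.Ioc 0 T ×ˢ Set.Icc 0 1))
    (hdt1 : ∀ t ∈ Set.Ioc (0:ℝ) T, ∀ x ∈ Set.Icc (0:ℝ) 1,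
      HasDerivAt (fun s => u₁ s x) (u₁t t x) t)
    (hdt2 : ∀ t ∈ Set.Ioc (0:ℝ) T, ∀ x ∈ Set.Icc (0:ℝ) 1,
      HasDerivAt (fun s => u₂ s x) (u₂t t x) t)
    (hdx1 : ∀ t ∈ Set.Ioc (0:ℝ) T, ∀ x ∈ Set.Ioo (0:ℝ) 1,
      HasDerivAt (u₁ t) (u₁x t x) x ∧ HasDerivAt (u₁x t) (u₁xx t x) x)
    (hdx2 : ∀ t ∈ Set.Ioc (0:ℝ) T, ∀ x ∈ Set.Ioo (0:ℝ) 1,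
      HasDerivAt (u₂ t) (u₂x t x) x ∧ HasDerivAt (u₂x t) (u₂xx t x) x)
    (hmono1 : ∀ t ∈ Set.Ioc (0:ℝ) T, MonotoneOn (u₁ t) (Set.Icc 0 1))
    (hmono2 : ∀ t ∈ Set.Ioc (0:ℝ) T, MonotoneOn (u₂ t) (Set.Icc 0 1))
    (hbd : ∃ γ : ℝ, γ < 1 ∧ ∃ M : ℝ,
      (∀ t ∈ Set.Ioc (0:ℝ) T, ∀ x ∈ Set.Icc (0:ℝ) 1,
        t ^ γ * |u₁ t x| ≤ M ∧ t ^ γ * |u₁x t x| ≤ M) ∨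
      (∀ t ∈ Set.Ioc (0:ℝ) T, ∀ x ∈ Set.Icc (0:ℝ) 1,
        t ^ γ * |u₂ t x| ≤ M ∧ t ^ γ * |u₂x t x| ≤ M))
    (hsub : ∀ t ∈ Set.Ioc (0:ℝ) T, ∀ x ∈ Set.Ioo (0:ℝ) 1,
      u₁t t x ≤ x * u₁xx t x + u₁ t x * u₁x t x)
    (hsup : ∀ t ∈ Set.Ioc (0:ℝ) T, ∀ x ∈ Set.Ioo (0:ℝ) 1,
      x * u₂xx t x + u₂ t x * u₂x t x ≤ u₂t t x)
    (hinit : ∀ x ∈ Set.Icc (0:ℝ) 1, u₁ 0 x ≤ u₂ 0 x)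
    (hbc0 : ∀ t ∈ Set.Icc (0:ℝ) T, u₁ t 0 ≤ u₂ t 0)
    (hbc1 : ∀ t ∈ Set.Icc (0:ℝ) T, u₁ t 1 ≤ u₂ t 1) :
    ∀ t ∈ Set.Icc (0:ℝ) T, ∀ x ∈ Set.Icc (0:ℝ) 1, u₁ t x ≤ u₂ t x := by
  obtain ⟨γ, hγ, M, hcase⟩ := hbd
  have hM : 0 ≤ M := by
    have hT' : T ∈ Set.Ioc (0:ℝ) T := ⟨hT, le_refl T⟩
    have h0 : (0:ℝ) ∈ Set.Icc (0:ℝ) 1 := ⟨le_refl 0, zero_le_one⟩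
    have hp : 0 < T ^ γ := Real.rpow_pos_of_pos hT γ
    rcases hcase with h | h
    · have := (h T hT' 0 h0).1
      nlinarith [abs_nonneg (u₁ T 0), mul_nonneg hp.le (abs_nonneg (u₁ T 0))]
    · have := (h T hT' 0 h0).1
      nlinarith [abs_nonneg (u₂ T 0), mul_nonneg hp.le (abs_nonneg (u₂ T 0))]
  have main := max_principle_aux T γ M hT hγ hM
    (fun t x => u₁ t x - u₂ t x) (fun t x => u₁t t x - u₂t t x)
    (fun t x => u₁x t x - u₂x t x) (fun t x => u₁xx t x - u₂xx t x)
    (hc1.sub hc2)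
    (fun t ht x hx => (hdt1 t ht x hx).sub (hdt2 t ht x hx))
    (fun t ht x hx => ((hdx1 t ht x hx).1.sub (hdx2 t ht x hx).1))
    (fun t ht x hx => ((hdx1 t ht x hx).2.sub (hdx2 t ht x hx).2))
    ?_
    (fun x hx => sub_nonpos.2 (hinit x hx))
    (fun t ht => sub_nonpos.2 (hbc0 t ht))
    (fun t ht => sub_nonpos.2 (hbc1 t ht))
  · intro t ht x hx
    exact sub_nonpos.1 (main t ht x hx)
  · intro t ht x hx hwx0 hwxx hwpos
    have heq : u₁x t x = u₂x t x := sub_eq_zero.1 hwx0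
    have h1 := hsub t ht x hx
    have h2 := hsup t ht x hx
    have hxx : x * (u₁xx t x - u₂xx t x) ≤ 0 :=
      mul_nonpos_of_nonneg_of_nonpos hx.1.le hwxx
    have ht' : 0 < t ^ γ := Real.rpow_pos_of_pos ht.1 γ
    have hbnd : ∃ c : ℝ, (u₁ t x * u₁x t x - u₂ t x * u₂x t x = c * (u₁ t x - u₂ t x))
        ∧ |c| ≤ M * t ^ (-γ) := by
      have hrw : M * t ^ (-γ) = M / t ^ γ := by
        rw [Real.rpow_neg ht.1.le, div_eq_mul_inv]
      rcases hcase with h | h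
      · refine ⟨u₁x t x, by rw [heq]; ring, ?_⟩
        rw [hrw]
        refine (le_div_iff₀ ht').2 ?_
        rw [mul_comm]
        exact (h t ht x ⟨hx.1.le, hx.2.le⟩).2
      · refine ⟨u₂x t x, by rw [heq]; ring, ?_⟩
        rw [hrw]
        refine (le_div_iff₀ ht').2 ?_
        rw [mul_comm]
        exact (h t ht x ⟨hx.1.le, hx.2.le⟩).2
    obtain ⟨c, hc, hcb⟩ := hbnd
    have h4 : c * (u₁ t x - u₂ t x) ≤ M * t ^ (-γ) * (u₁ t x - u₂ t x) :=
      mul_le_mul_of_nonneg_right (le_trans (le_abs_self c) hcb) hwpos.le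
    nlinarith
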